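/- Let (Ω, F, P) be a probability space, let x_0 : Ω → ℝ^d, u_1, …, u_n : Ω → ℝ^p, v_1, …, v_n : Ω → ℝ^q be random variables such that the family (x_0, u_1, …, u_n, v_1, …, v_n) is mutually independent, let f_k : ℝ^d × ℝ^p → ℝ^d and h_k : ℝ^d × ℝ^q → ℝ^m be measurable, and define x_k = f_k(x_{k−1}, u_k) and y_k = h_k(x_k, v_k) for k = 1, …, n. Then for every k with 1 ≤ k ≤ n and every bounded measurable φ : ℝ^d → ℝ, almost surely E[φ(x_k) | σ(x_{k−1}) ⊔ σ(y_1, …, y_{k−1})] = E[φ(x_k) | σ(x_{k−1})]. -/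

import Mathlib

open MeasureTheory ProbabilityTheory Finset

/-- In the state space model `x_k = f_k(x_{k−1}, u_k)`, `y_k = h_k(x_k, v_k)` with
`(x_0, u_1, …, u_n, v_1, …, v_n)` mutually independent: for `1 ≤ k ≤ n` and
bounded measurable `φ`, almost surely
`E[φ(x_k) | σ(x_{k−1}) ⊔ σ(y_1, …, y_{k−1})] = E[φ(x_k) | σ(x_{k−1})]`. -/
lemma freezing_aux {Ω α β : Type*} {G : MeasurableSpace Ω} {mΩ : MeasurableSpace Ω}
    {mα : MeasurableSpace α} {mβ : MeasurableSpace β}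
    (P : Measure Ω) [IsProbabilityMeasure P] (hG : G ≤ mΩ)
    {X : Ω → α} (hX : Measurable[G] X) {U : Ω → β} (hU : Measurable U)
    (hindep : Indep G (MeasurableSpace.comap U inferInstance) P)
    {Ψ : α × β → ℝ} (hΨ : Measurable Ψ) {C : ℝ} (hC0 : 0 ≤ C) (hC : ∀ z, |Ψ z| ≤ C) :
    P[fun ω => Ψ (X ω, U ω) | G] =ᵐ[P] fun ω => ∫ b, Ψ (X ω, b) ∂(P.map U) := by
  haveI : IsProbabilityMeasure (P.map U) := Measure.isProbabilityMeasure_map hU.aemeasurable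
  have hXm : Measurable X := hX.mono hG le_rfl
  have hΨsm : StronglyMeasurable Ψ := hΨ.stronglyMeasurable
  -- the "frozen" function
  set g : α → ℝ := fun a => ∫ b, Ψ (a, b) ∂(P.map U) with hg
  have hgm : StronglyMeasurable g := hΨsm.integral_prod_right'
  have hgbdd : ∀ a, |g a| ≤ C := by
    intro a
    calc |g a| ≤ ∫ b, |Ψ (a, b)| ∂(P.map U) := by
          simpa [Real.norm_eq_abs] using norm_integral_le_integral_norm (fun b => Ψ (a, b))
      _ ≤ ∫ _b, C ∂(P.map U) := by
          refine integral_mono_of_nonneg (Filter.Eventually.of_forall fun b => abs_nonneg _)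
            (integrable_const C) (Filter.Eventually.of_forall fun b => hC _)
      _ = C := by simp
  have hfmeas : Measurable fun ω => Ψ (X ω, U ω) := hΨ.comp (hXm.prodMk hU)
  have hfint : Integrable (fun ω => Ψ (X ω, U ω)) P := by
    refine (integrable_const C).mono' hfmeas.aestronglyMeasurable ?_
    exact Filter.Eventually.of_forall fun ω => by simpa [Real.norm_eq_abs] using hC _
  symm
  refine ae_eq_condExp_of_forall_setIntegral_eq hG hfint ?_ ?_ ?_
  · intro s _ _
    have hcint : IntegrableOn (fun _ : Ω => C) s P :=
      integrableOn_const (measure_lt_top _ _).ne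
    refine hcint.mono' ?_ ?_
    · exact (hgm.comp_measurable hXm).aestronglyMeasurable.restrict
    · exact Filter.Eventually.of_forall fun ω => by simpa [Real.norm_eq_abs] using hgbdd _
  · -- key step
    intro s hs _
    have hsm : MeasurableSet s := hG s hs
    -- clamp function
    set c : ℝ → ℝ := fun t => min (max t 0) 1 with hc
    have hcm : Measurable c := (measurable_id.max measurable_const).min measurable_const
    have hc01 : ∀ t, 0 ≤ c t ∧ c t ≤ 1 := fun t =>
      ⟨le_min (le_max_right _ _) zero_le_one, min_le_right _ _⟩
    have hcind : ∀ ω, c (s.indicator (fun _ => (1:ℝ)) ω) = s.indicator (fun _ => (1:ℝ)) ω := by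
      intro ω
      by_cases hω : ω ∈ s <;> simp [hc, Set.indicator_apply, hω]
    set Z : Ω → α × ℝ := fun ω => (X ω, s.indicator (fun _ => (1:ℝ)) ω) with hZ
    have hZmG : Measurable[G] Z := by
      refine Measurable.prodMk hX ?_
      exact ((measurable_const : @Measurable Ω ℝ G _ fun _ => (1:ℝ))).indicator hs
    have hZm : Measurable Z := hZmG.mono hG le_rfl
    set F : (α × ℝ) × β → ℝ := fun z => c z.1.2 * Ψ (z.1.1, z.2) with hF
    have hFm : Measurable F := by
      have h1 : Measurable fun z : (α × ℝ) × β => c z.1.2 :=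
        hcm.comp (measurable_snd.comp measurable_fst)
      have h2 : Measurable fun z : (α × ℝ) × β => Ψ (z.1.1, z.2) :=
        hΨ.comp ((measurable_fst.comp measurable_fst).prodMk measurable_snd)
      exact h1.mul h2
    have hFbdd : ∀ z, ‖F z‖ ≤ C := by
      intro z
      rw [Real.norm_eq_abs, hF, abs_mul]
      calc |c z.1.2| * |Ψ (z.1.1, z.2)| ≤ 1 * C := by
            refine mul_le_mul ?_ (hC _) (abs_nonneg _) zero_le_one
            rw [abs_of_nonneg (hc01 _).1]; exact (hc01 _).2
        _ = C := one_mul C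
    have hZU : IndepFun Z U P := by
      exact indep_of_indep_of_le_left hindep hZmG.comap_le
    have hmap : P.map (fun ω => (Z ω, U ω)) = (P.map Z).prod (P.map U) :=
      (indepFun_iff_map_prod_eq_prod_map_map hZm.aemeasurable hU.aemeasurable).mp hZU
    haveI : IsProbabilityMeasure (P.map Z) := Measure.isProbabilityMeasure_map hZm.aemeasurable
    have hFint : Integrable F ((P.map Z).prod (P.map U)) :=
      (integrable_const C).mono' hFm.aestronglyMeasurable (Filter.Eventually.of_forall hFbdd)
    have key : ∫ ω, F (Z ω, U ω) ∂P = ∫ z, c z.2 * g z.1 ∂(P.map Z) := by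
      rw [← integral_map (hZm.prodMk hU).aemeasurable hFm.aestronglyMeasurable, hmap,
        integral_prod _ hFint]
      congr 1
      ext z
      rw [← integral_const_mul]
    calc ∫ ω in s, g (X ω) ∂P = ∫ ω, s.indicator (fun _ => (1:ℝ)) ω * g (X ω) ∂P := by
          rw [← integral_indicator hsm]
          congr 1
          ext ω
          by_cases hω : ω ∈ s <;> simp [Set.indicator_apply, hω]
      _ = ∫ ω, c ((Z ω).2) * g ((Z ω).1) ∂P := by
          refine integral_congr_ae (Filter.Eventually.of_forall fun ω => ?_)
          simp only [hZ, hcind]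
      _ = ∫ z, c z.2 * g z.1 ∂(P.map Z) := by
          have hgz : Measurable fun z : α × ℝ => c z.2 * g z.1 :=
            (hcm.comp measurable_snd).mul (hgm.measurable.comp measurable_fst)
          exact (integral_map (φ := Z) hZm.aemeasurable hgz.aestronglyMeasurable).symm
      _ = ∫ ω, F (Z ω, U ω) ∂P := key.symm
      _ = ∫ ω, s.indicator (fun _ => (1:ℝ)) ω * Ψ (X ω, U ω) ∂P := by
          congr 1
          ext ω
          simp only [hF, hZ, hcind]
      _ = ∫ ω in s, Ψ (X ω, U ω) ∂P := by
          rw [← integral_indicator hsm]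
          congr 1
          ext ω
          by_cases hω : ω ∈ s <;> simp [Set.indicator_apply, hω]
  · exact (hgm.comp_measurable hX).aestronglyMeasurable


theorem stmt_10 {Ω : Type*} [MeasurableSpace Ω] (P : Measure Ω) [IsProbabilityMeasure P]
    (d p q m n : ℕ) (hd : 0 < d) (hp : 0 < p) (hq : 0 < q) (hm : 0 < m)
    (x0 : Ω → (Fin d → ℝ)) (hx0meas : Measurable x0)
    (u : ℕ → Ω → (Fin p → ℝ)) (humeas : ∀ i, Measurable (u i))
    (v : ℕ → Ω → (Fin q → ℝ)) (hvmeas : ∀ i, Measurable (v i))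
    (f : ℕ → (Fin d → ℝ) × (Fin p → ℝ) → (Fin d → ℝ)) (hf : ∀ i, Measurable (f i))
    (h : ℕ → (Fin d → ℝ) × (Fin q → ℝ) → (Fin m → ℝ)) (hh : ∀ i, Measurable (h i))
    (hindep : iIndep
      (fun i : Option (Fin n ⊕ Fin n) =>
        i.elim (MeasurableSpace.comap x0 inferInstance)
          (fun j => Sum.elim
            (fun a : Fin n => MeasurableSpace.comap (u ((a : ℕ) + 1)) inferInstance)
            (fun b : Fin n => MeasurableSpace.comap (v ((b : ℕ) + 1)) inferInstance) j)) P)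
    (x : ℕ → Ω → (Fin d → ℝ)) (hx0 : x 0 = x0)
    (hx : ∀ k, 1 ≤ k → k ≤ n → x k = fun ω => f k (x (k - 1) ω, u k ω))
    (y : ℕ → Ω → (Fin m → ℝ))
    (hy : ∀ k, 1 ≤ k → k ≤ n → y k = fun ω => h k (x k ω, v k ω))
    (k : ℕ) (hk1 : 1 ≤ k) (hkn : k ≤ n)
    (φ : (Fin d → ℝ) → ℝ) (hφ : Measurable φ) (hφbdd : ∃ C, ∀ w, |φ w| ≤ C) :
    P[fun ω => φ (x k ω) |
        MeasurableSpace.comap (x (k - 1)) inferInstance ⊔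
          ⨆ i ∈ Finset.Icc 1 (k - 1), MeasurableSpace.comap (y i) inferInstance]
      =ᵐ[P]
    P[fun ω => φ (x k ω) | MeasurableSpace.comap (x (k - 1)) inferInstance] := by
    classical
  rename_i mΩ _hPP
  set M : Option (Fin n ⊕ Fin n) → MeasurableSpace Ω :=
    fun i => i.elim (MeasurableSpace.comap x0 inferInstance)
      (fun j => Sum.elim
        (fun a : Fin n => MeasurableSpace.comap (u ((a : ℕ) + 1)) inferInstance)
        (fun b : Fin n => MeasurableSpace.comap (v ((b : ℕ) + 1)) inferInstance) j) with hM
  have h_le : ∀ i, M i ≤ mΩ := by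
    rintro (_ | (a | b))
    · exact hx0meas.comap_le
    · exact (humeas _).comap_le
    · exact (hvmeas _).comap_le
  have hk1n : k - 1 < n := by omega
  set i₀ : Option (Fin n ⊕ Fin n) := some (Sum.inl ⟨k - 1, hk1n⟩) with hi₀
  set H : MeasurableSpace Ω := ⨆ j ∈ ({i₀}ᶜ : Set (Option (Fin n ⊕ Fin n))), M j with hH
  have hH_le : H ≤ mΩ := iSup₂_le fun j _ => h_le j
  have hmem_le : ∀ j ∈ ({i₀}ᶜ : Set (Option (Fin n ⊕ Fin n))), M j ≤ H := by
    intro j hj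
    exact le_biSup M hj
  -- the u_k σ-algebra
  have hMi₀ : M i₀ = MeasurableSpace.comap (u k) inferInstance := by
    show MeasurableSpace.comap (u ((k - 1) + 1)) inferInstance = _
    rw [Nat.sub_add_cancel hk1]
  -- Independence of H and σ(u k)
  have hIndepH : Indep H (MeasurableSpace.comap (u k) inferInstance) P := by
    have h2 := indep_iSup_of_disjoint h_le hindep
      (S := ({i₀}ᶜ : Set (Option (Fin n ⊕ Fin n)))) (T := {i₀}) disjoint_compl_left
    rw [_root_.iSup_singleton] at h2
    rw [← hMi₀]
    exact h2
  -- states up to k-1 are H-measurable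
  have hxH : ∀ j, j ≤ k - 1 → Measurable[H] (x j) := by
    intro j
    induction j with
    | zero =>
      intro _
      rw [hx0, measurable_iff_comap_le]
      refine le_trans ?_ (hmem_le none (by simp [hi₀]))
      rfl
    | succ j ih =>
      intro hj
      rw [hx (j + 1) (by omega) (by omega)]
      have hjn : j < n := by omega
      have hu : Measurable[H] (u (j + 1)) := by
        rw [measurable_iff_comap_le]
        refine le_trans ?_ (hmem_le (some (Sum.inl ⟨j, hjn⟩)) ?_)
        · rfl
        · simp only [Set.mem_compl_iff, Set.mem_singleton_iff, hi₀, Option.some.injEq]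
          intro hcon
          have := Sum.inl.inj hcon
          have : j = k - 1 := by simpa [Fin.ext_iff] using this
          omega
      have hxj : Measurable[H] (x ((j + 1) - 1)) := by
        simpa using ih (by omega)
      exact (hf (j + 1)).comp (hxj.prodMk hu)
  -- observations up to k-1 are H-measurable
  have hyH : ∀ j, 1 ≤ j → j ≤ k - 1 → Measurable[H] (y j) := by
    intro j hj1 hjk
    rw [hy j hj1 (by omega)]
    obtain ⟨j', rfl⟩ : ∃ j', j = j' + 1 := ⟨j - 1, by omega⟩
    have hj'n : j' < n := by omega
    have hv : Measurable[H] (v (j' + 1)) := by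
      rw [measurable_iff_comap_le]
      refine le_trans ?_ (hmem_le (some (Sum.inr ⟨j', hj'n⟩)) ?_)
      · rfl
      · simp [hi₀]
    exact (hh (j' + 1)).comp ((hxH (j' + 1) hjk).prodMk hv)
  -- the two conditioning σ-algebras
  set G₁ : MeasurableSpace Ω := MeasurableSpace.comap (x (k - 1)) inferInstance with hG₁
  set G₂ : MeasurableSpace Ω :=
    G₁ ⊔ ⨆ i ∈ Finset.Icc 1 (k - 1), MeasurableSpace.comap (y i) inferInstance with hG₂
  have hG₂H : G₂ ≤ H := by
    refine sup_le ?_ ?_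
    · exact (measurable_iff_comap_le.mp (hxH (k - 1) le_rfl))
    · refine iSup₂_le fun i hi => ?_
      rw [Finset.mem_Icc] at hi
      exact measurable_iff_comap_le.mp (hyH i hi.1 hi.2)
  have hG₁₂ : G₁ ≤ G₂ := le_sup_left
  have hG₂le : G₂ ≤ mΩ := le_trans hG₂H hH_le
  have hG₁le : G₁ ≤ mΩ := le_trans hG₁₂ hG₂le
  -- independence transfers
  have hIndep₂ : Indep G₂ (MeasurableSpace.comap (u k) inferInstance) P :=
    indep_of_indep_of_le_left hIndepH hG₂H
  have hIndep₁ : Indep G₁ (MeasurableSpace.comap (u k) inferInstance) P :=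
    indep_of_indep_of_le_left hIndep₂ hG₁₂
  -- set up freezing
  obtain ⟨C, hC⟩ := hφbdd
  set Ψ : (Fin d → ℝ) × (Fin p → ℝ) → ℝ := fun z => φ (f k z) with hΨdef
  have hΨm : Measurable Ψ := hφ.comp (hf k)
  have hC0 : (0 : ℝ) ≤ max C 0 := le_max_right _ _
  have hCb : ∀ z, |Ψ z| ≤ max C 0 := fun z => le_trans (hC _) (le_max_left _ _)
  have hXmG₂ : Measurable[G₂] (x (k - 1)) := measurable_iff_comap_le.mpr hG₁₂
  have hXmG₁ : Measurable[G₁] (x (k - 1)) := measurable_iff_comap_le.mpr le_rfl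
  have hfun : (fun ω => φ (x k ω)) = fun ω => Ψ (x (k - 1) ω, u k ω) := by
    rw [hx k hk1 hkn]
  have h2 := freezing_aux P hG₂le hXmG₂ (humeas k) hIndep₂ hΨm hC0 hCb
  have h1 := freezing_aux P hG₁le hXmG₁ (humeas k) hIndep₁ hΨm hC0 hCb
  rw [hfun]
  exact h2.trans h1.symm
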